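/- Let −1 < δ < 1, δ ≠ 0, and set c = −(1+δ²)/(1−δ²). Define V_n(x) = ((1+δ)/2)U_n(x) + ((1−δ)/2)U_{n−1}(x) with U_{−1}=0. Then for all n ≥ 0: V_{n+1}(c)/V_n(c) = (δ+1)/(δ−1). -/

import Mathlib

/-- Chebyshev polynomials of the second kind:
`U 0 x = 1`, `U 1 x = 2x`, `U (n+2) x = 2x * U (n+1) x - U n x`. -/
noncomputable def chebU : ℕ → ℝ → ℝ
  | 0, _ => 1
  | 1, x => 2 * x
  | n + 2, x => 2 * x * chebU (n + 1) x - chebU n x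

/-- `V n x = ((1+δ)/2) U n x + ((1−δ)/2) U (n−1) x`, with the convention `U_{-1} = 0`. -/
noncomputable def chebV (δ : ℝ) : ℕ → ℝ → ℝ
  | 0, x => (1 + δ) / 2 * chebU 0 x
  | n + 1, x => (1 + δ) / 2 * chebU (n + 1) x + (1 - δ) / 2 * chebU n x

lemma chebV_rec (δ x : ℝ) (n : ℕ) :
    chebV δ (n + 2) x = 2 * x * chebV δ (n + 1) x - chebV δ n x := by
  match n with
  | 0 => simp [chebV, chebU]; ring
  | m + 1 => simp [chebV, chebU]; ring

lemma chebV_closed (δ : ℝ) (hδ1 : -1 < δ) (hδ2 : δ < 1) (n : ℕ) :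
    chebV δ n (-(1 + δ ^ 2) / (1 - δ ^ 2)) = (1 + δ) / 2 * ((δ + 1) / (δ - 1)) ^ n := by
  have h1 : (δ - 1) ≠ 0 := by nlinarith
  have h2 : (1 - δ ^ 2) ≠ 0 := by nlinarith
  induction n using Nat.twoStepInduction with
  | zero => simp [chebV, chebU]
  | one => simp [chebV, chebU]; field_simp; ring
  | more m ih1 ih2 =>
    rw [chebV_rec, ih1, ih2]
    rw [pow_succ _ (m + 1), pow_succ _ m]
    field_simp
    ring
theorem chebV_ratio (δ : ℝ) (hδ1 : -1 < δ) (hδ2 : δ < 1) (hδ0 : δ ≠ 0) (n : ℕ) :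
    chebV δ (n + 1) (-(1 + δ ^ 2) / (1 - δ ^ 2)) / chebV δ n (-(1 + δ ^ 2) / (1 - δ ^ 2)) =
      (δ + 1) / (δ - 1) := by
  rw [chebV_closed δ hδ1 hδ2, chebV_closed δ hδ1 hδ2]
  have h1 : (δ - 1) ≠ 0 := by nlinarith
  have h3 : (1 + δ) ≠ 0 := by nlinarith
  have hr : ((δ + 1) / (δ - 1)) ≠ 0 := by
    apply div_ne_zero _ h1; intro h; apply h3; linarith
  have hne : (1 + δ) / 2 * ((δ + 1) / (δ - 1)) ^ n ≠ 0 :=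
    mul_ne_zero (by positivity) (pow_ne_zero _ hr)
  rw [pow_succ, ← mul_assoc, mul_comm _ ((δ + 1) / (δ - 1)), mul_div_assoc,
    div_self hne, mul_one]
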